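/- Define w : ℝ → ℝ by w(r) = (1/7)(3r⁶ − 24r⁵ + 70r⁴ − 112r³ + 105r² − 56r + 14), and define the vector field v : ℝ² → ℝ² by v(x) = w(|x|) · x. Then for every x ∈ ℝ² with x ≠ 0, v is differentiable at x and its divergence satisfies div v (x) = 4(1 − |x|)⁶ − (4/7)|x|⁶. -/

import Mathlib

/-- Radial profile of the exact Darcy velocity: `u(r) = r · w(r)`. -/
noncomputable def radialProfile (r : ℝ) : ℝ :=
  (1 / 7) * (3 * r ^ 6 - 24 * r ^ 5 + 70 * r ^ 4 - 112 * r ^ 3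
    + 105 * r ^ 2 - 56 * r + 14)

/-- The exact Darcy velocity field `v(x) = w(|x|) x` on the plane. -/
noncomputable def darcyField (x : EuclideanSpace ℝ (Fin 2)) :
    EuclideanSpace ℝ (Fin 2) :=
  radialProfile ‖x‖ • x

/-- Derivative of the radial profile. -/
noncomputable def radialProfile' (r : ℝ) : ℝ :=
  (1 / 7) * (18 * r ^ 5 - 120 * r ^ 4 + 280 * r ^ 3 - 336 * r ^ 2 + 105 * 2 * r - 56)

lemma hasDerivAt_radialProfile (r : ℝ) :
    HasDerivAt radialProfile (radialProfile' r) r := by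
  have h := (((((((hasDerivAt_pow 6 r).const_mul (3:ℝ)).sub
      ((hasDerivAt_pow 5 r).const_mul 24)).add
      ((hasDerivAt_pow 4 r).const_mul 70)).sub
      ((hasDerivAt_pow 3 r).const_mul 112)).add
      ((hasDerivAt_pow 2 r).const_mul 105)).sub
      ((hasDerivAt_id r).const_mul 56)).add_const 14 |>.const_mul (1 / 7 : ℝ)
  simp only [id_eq] at h
  norm_num at h
  unfold radialProfile radialProfile'
  refine h.congr_deriv ?_
  ring

/-- The norm has Fréchet derivative `‖x‖⁻¹ • ⟪x, ·⟫` away from the origin. -/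
lemma hasFDerivAt_norm' {E : Type*} [NormedAddCommGroup E] [InnerProductSpace ℝ E]
    {x : E} (hx : x ≠ 0) :
    HasFDerivAt (fun y : E => ‖y‖) (‖x‖⁻¹ • innerSL ℝ x) x := by
  have hns : HasFDerivAt (fun y : E => ‖y‖ ^ 2) (2 • innerSL ℝ x) x := by
    simpa using (hasFDerivAt_id x).norm_sq
  have hsq : (‖x‖ : ℝ) ^ 2 ≠ 0 := pow_ne_zero 2 (norm_ne_zero_iff.2 hx)
  have h := (Real.hasDerivAt_sqrt hsq).comp_hasFDerivAt x hns
  have hfun : (fun y : E => Real.sqrt (‖y‖ ^ 2)) = fun y : E => ‖y‖ := by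
    funext y; rw [Real.sqrt_sq (norm_nonneg y)]
  simp only [Function.comp_def] at h
  rw [hfun] at h
  refine (h.congr_fderiv ?_)
  rw [Real.sqrt_sq (norm_nonneg x)]
  ext y
  simp only [ContinuousLinearMap.coe_smul', Pi.smul_apply, smul_eq_mul,
    ContinuousLinearMap.smul_apply]
  field_simp
  ring

lemma hasFDerivAt_darcyField (x : EuclideanSpace ℝ (Fin 2)) (hx : x ≠ 0) :
    HasFDerivAt darcyField
      (radialProfile ‖x‖ • ContinuousLinearMap.id ℝ (EuclideanSpace ℝ (Fin 2))
        + ((radialProfile' ‖x‖ • (‖x‖⁻¹ • innerSL ℝ x)).smulRight x)) x := by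
  have hc : HasFDerivAt (fun y : EuclideanSpace ℝ (Fin 2) => radialProfile ‖y‖)
      (radialProfile' ‖x‖ • (‖x‖⁻¹ • innerSL ℝ x)) x :=
    (hasDerivAt_radialProfile ‖x‖).comp_hasFDerivAt x (hasFDerivAt_norm' hx)
  exact hc.smul (hasFDerivAt_id x)

/-- Away from the origin, the radial field `v(x) = w(|x|) x` is differentiable
and satisfies the incompressibility equation
`div v(x) = 4(1 − |x|)⁶ − (4/7)|x|⁶`. -/
theorem darcyField_div (x : EuclideanSpace ℝ (Fin 2)) (hx : x ≠ 0) :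
    DifferentiableAt ℝ darcyField x ∧
      (∑ i : Fin 2, fderiv ℝ darcyField x (EuclideanSpace.single i 1) i)
        = 4 * (1 - ‖x‖) ^ 6 - (4 / 7) * ‖x‖ ^ 6 := by
  have hF := hasFDerivAt_darcyField x hx
  refine ⟨hF.differentiableAt, ?_⟩
  rw [hF.fderiv]
  have hinner : ∀ i : Fin 2, (innerSL ℝ x) (EuclideanSpace.single i (1 : ℝ)) = x i := by
    intro i
    simp [EuclideanSpace.inner_single_right]
  have hsum : ∑ i : Fin 2, x i * x i = ‖x‖ ^ 2 := by
    have := @real_inner_self_eq_norm_sq (EuclideanSpace ℝ (Fin 2)) _ _ x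
    rw [← this]
    simp [PiLp.inner_apply, RCLike.inner_apply]
    rw [EuclideanSpace.norm_eq, Real.sq_sqrt (by positivity), Fin.sum_univ_two]
    simp [sq]
  have hr : (‖x‖ : ℝ) ≠ 0 := norm_ne_zero_iff.2 hx
  have expand : ∀ i : Fin 2,
      ((radialProfile ‖x‖ • ContinuousLinearMap.id ℝ (EuclideanSpace ℝ (Fin 2))
        + ((radialProfile' ‖x‖ • (‖x‖⁻¹ • innerSL ℝ x)).smulRight x))
        (EuclideanSpace.single i 1)) i
      = radialProfile ‖x‖ * (EuclideanSpace.single i (1:ℝ)) i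
        + radialProfile' ‖x‖ * ‖x‖⁻¹ * x i * x i := by
    intro i
    simp only [ContinuousLinearMap.add_apply, ContinuousLinearMap.smul_apply,
      ContinuousLinearMap.id_apply, ContinuousLinearMap.smulRight_apply,
      hinner i, PiLp.add_apply, PiLp.smul_apply, smul_eq_mul]
    ring
  rw [Finset.sum_congr rfl (fun i _ => expand i), Finset.sum_add_distrib]
  have h1 : ∑ i : Fin 2, radialProfile ‖x‖ * (EuclideanSpace.single i (1:ℝ)) i
      = 2 * radialProfile ‖x‖ := by
    simp [EuclideanSpace.single_apply, Fin.sum_univ_two]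
    try ring
  have h2 : ∑ i : Fin 2, radialProfile' ‖x‖ * ‖x‖⁻¹ * x i * x i
      = radialProfile' ‖x‖ * ‖x‖ := by
    have : ∑ i : Fin 2, radialProfile' ‖x‖ * ‖x‖⁻¹ * x i * x i
        = radialProfile' ‖x‖ * ‖x‖⁻¹ * ∑ i : Fin 2, x i * x i := by
      rw [Finset.mul_sum]; congr 1; funext i; ring
    rw [this, hsum]
    field_simp
  rw [h1, h2]
  unfold radialProfile radialProfile'
  ring
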